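/- Define h(x) = (2x/(2e^{−1/2}x + 1)) · e^{ (1 − 2/(2e^{−1/2}x + 3))^{−1}/2 − 1 } for x ≥ 1. Then h is increasing on [1, ∞), lim_{x→∞} h(x) = 1, and consequently h(x) < 1 for every x ≥ 1. -/

import Mathlib

/-- The total decay factor of the two-spin analysis. -/
noncomputable def h17 (x : ℝ) : ℝ :=
  (2 * x / (2 * Real.exp (-(1 : ℝ) / 2) * x + 1)) *
    Real.exp ((1 - 2 / (2 * Real.exp (-(1 : ℝ) / 2) * x + 3))⁻¹ / 2 - 1)

noncomputable def g17 (u : ℝ) : ℝ := (1 - u) * Real.exp u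

lemma h17_eq (x : ℝ) (hx : 0 < x) :
    h17 x = g17 ((2 * Real.exp (-(1 : ℝ) / 2) * x + 1)⁻¹) := by
  have he : (0:ℝ) < Real.exp (-(1:ℝ)/2) := Real.exp_pos _
  unfold h17 g17
  set e := Real.exp (-(1:ℝ)/2) with hee
  have ht : 0 < 2*e*x + 1 := by positivity
  have ht3 : 0 < 2*e*x + 3 := by positivity
  have key : (1 - 2 / (2*e*x + 3))⁻¹ / 2 - 1 = (2*e*x + 1)⁻¹ + (-(1:ℝ)/2) := by
    have h1 : 1 - 2 / (2*e*x + 3) = (2*e*x+1)/(2*e*x+3) := by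
      field_simp
      ring
    rw [h1, inv_div]
    field_simp
    ring
  rw [key, Real.exp_add, ← hee]
  have h2 : 2*x/(2*e*x+1) * e = 1 - (2*e*x+1)⁻¹ := by
    field_simp
    ring
  linear_combination Real.exp ((2*e*x+1)⁻¹) * h2

lemma g17_hasDeriv (u : ℝ) : HasDerivAt g17 (-u * Real.exp u) u := by
  have h1 : HasDerivAt (fun u:ℝ => 1-u) (-1) u := by
    simpa using (hasDerivAt_id u).const_sub 1
  have h2 := Real.hasDerivAt_exp u
  have := h1.mul h2
  show HasDerivAt ((fun u => 1 - u) * Real.exp) _ u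
  exact this.congr_deriv (by ring)

lemma g17_anti : StrictAntiOn g17 (Set.Ici 0) := by
  apply strictAntiOn_of_deriv_neg (convex_Ici 0)
  · exact Continuous.continuousOn (by unfold g17; continuity)
  · intro u hu
    rw [interior_Ici] at hu
    rw [(g17_hasDeriv u).deriv]
    have := Real.exp_pos u
    have : (0:ℝ) < u := hu
    nlinarith [Real.exp_pos u]

lemma g17_lt_one {u : ℝ} (hu : 0 < u) : g17 u < 1 := by
  have h := Real.add_one_lt_exp (show -u ≠ 0 by simpa using hu.ne')
  have h2 : (1-u) * Real.exp u < Real.exp (-u) * Real.exp u := by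
    apply mul_lt_mul_of_pos_right _ (Real.exp_pos u)
    linarith
  rw [← Real.exp_add] at h2
  simpa [g17] using h2

/-- h is increasing on [1, ∞), tends to 1 at ∞, and consequently h(x) < 1 for x ≥ 1. -/
theorem stmt_17 :
    StrictMonoOn h17 (Set.Ici 1) ∧
    Filter.Tendsto h17 Filter.atTop (nhds 1) ∧
    ∀ x : ℝ, 1 ≤ x → h17 x < 1 := by
  have he : (0:ℝ) < Real.exp (-(1:ℝ)/2) := Real.exp_pos _
  set e := Real.exp (-(1:ℝ)/2) with hee
  have hupos : ∀ x : ℝ, 0 < x → 0 < (2*e*x+1)⁻¹ := fun x hx => by positivity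
  refine ⟨?_, ?_, ?_⟩
  · intro x hx y hy hxy
    have hx0 : (0:ℝ) < x := lt_of_lt_of_le one_pos hx
    have hy0 : (0:ℝ) < y := lt_of_lt_of_le one_pos hy
    rw [h17_eq x hx0, h17_eq y hy0, ← hee]
    have hlt : 2*e*x+1 < 2*e*y+1 := by nlinarith
    have htx : 0 < 2*e*x+1 := by positivity
    have huv : (2*e*y+1)⁻¹ < (2*e*x+1)⁻¹ := by
      exact inv_strictAnti₀ htx hlt
    exact g17_anti (le_of_lt (hupos y hy0)) (le_of_lt (hupos x hx0)) huv
  · have hcong : h17 =ᶠ[Filter.atTop] fun x => g17 ((2*e*x+1)⁻¹) := by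
      filter_upwards [Filter.eventually_gt_atTop (0:ℝ)] with x hx
      rw [h17_eq x hx, ← hee]
    rw [Filter.tendsto_congr' hcong]
    have h1 : Filter.Tendsto (fun x : ℝ => 2*e*x+1) Filter.atTop Filter.atTop := by
      apply Filter.tendsto_atTop_add_const_right
      exact Filter.Tendsto.const_mul_atTop (by positivity) Filter.tendsto_id
    have h2 : Filter.Tendsto (fun x : ℝ => (2*e*x+1)⁻¹) Filter.atTop (nhds 0) :=
      Filter.Tendsto.inv_tendsto_atTop h1
    have hg : Continuous g17 := by unfold g17; continuity
    have := (hg.tendsto 0).comp h2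
    simpa [g17, Function.comp_def] using this
  · intro x hx
    have hx0 : (0:ℝ) < x := lt_of_lt_of_le one_pos hx
    rw [h17_eq x hx0, ← hee]
    exact g17_lt_one (hupos x hx0)
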